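/- arXiv:2407.00857 — 7 statements merged into one kernel-verified Lean document; each statement's English description precedes it below -/
import Mathlib

section
/- Let M be a bounded operator on H₁ ⊕ H₂, written M(x ⊕ y) = M₁(x ⊕ y) ⊕ M₂(x ⊕ y) where M₁ : H₁ ⊕ H₂ → H₁ and M₂ : H₁ ⊕ H₂ → H₂ are bounded linear operators. If {xₙ ⊕ yₙ}ₙ≥1 is an M-frame for H₁ ⊕ H₂ with frame bounds A and B, then: (i) A‖M₁*(x)‖² ≤ ∑ₙ₌₁^∞ |⟨x, xₙ⟩|² ≤ B‖x‖² for all x ∈ H₁; (ii) A‖M₂*(y)‖² ≤ ∑ₙ₌₁^∞ |⟨y, yₙ⟩|² ≤ B‖y‖² for all y ∈ H₂. -/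
noncomputable section

open scoped ENNReal

/-- The sequence of direct sums `xₙ ⊕ yₙ` in the super Hilbert space `H₁ ⊕ H₂`,
realized as `WithLp 2 (H₁ × H₂)`. -/
def pairSeq {H₁ H₂ : Type*} [NormedAddCommGroup H₁] [NormedAddCommGroup H₂]
    (x : ℕ → H₁) (y : ℕ → H₂) : ℕ → WithLp 2 (H₁ × H₂) :=
  fun n => (WithLp.equiv 2 (H₁ × H₂)).symm (x n, y n)

/-- A sequence `{xₙ}` is a Bessel sequence: there is `B > 0` with
`∑ₙ |⟨v, xₙ⟩|² ≤ B‖v‖²` for all `v` (in particular the series converges). -/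
def IsBessel {H : Type*} [NormedAddCommGroup H] [InnerProductSpace ℂ H] (x : ℕ → H) : Prop :=
  ∃ B : ℝ, 0 < B ∧ ∀ v : H, Summable (fun n => ‖(inner ℂ v (x n) : ℂ)‖ ^ 2) ∧
    ∑' n, ‖(inner ℂ v (x n) : ℂ)‖ ^ 2 ≤ B * ‖v‖ ^ 2

/-- A sequence `{xₙ}` is a `K`-frame: there are `A, B > 0` with
`A‖K*v‖² ≤ ∑ₙ |⟨v, xₙ⟩|² ≤ B‖v‖²` for all `v`. -/
def IsKFrame {H : Type*} [NormedAddCommGroup H] [InnerProductSpace ℂ H] [CompleteSpace H]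
    (K : H →L[ℂ] H) (x : ℕ → H) : Prop :=
  ∃ A B : ℝ, 0 < A ∧ 0 < B ∧ ∀ v : H, Summable (fun n => ‖(inner ℂ v (x n) : ℂ)‖ ^ 2) ∧
    A * ‖K.adjoint v‖ ^ 2 ≤ ∑' n, ‖(inner ℂ v (x n) : ℂ)‖ ^ 2 ∧
    ∑' n, ‖(inner ℂ v (x n) : ℂ)‖ ^ 2 ≤ B * ‖v‖ ^ 2

/-- The operator `K ⊕ L` on the super Hilbert space `H₁ ⊕ H₂`,
`(K ⊕ L)(x ⊕ y) = Kx ⊕ Ly`. -/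
def dsum {H₁ H₂ : Type*}
    [NormedAddCommGroup H₁] [InnerProductSpace ℂ H₁]
    [NormedAddCommGroup H₂] [InnerProductSpace ℂ H₂]
    (K : H₁ →L[ℂ] H₁) (L : H₂ →L[ℂ] H₂) :
    WithLp 2 (H₁ × H₂) →L[ℂ] WithLp 2 (H₁ × H₂) :=
  ((WithLp.prodContinuousLinearEquiv 2 ℂ H₁ H₂).symm : (H₁ × H₂) →L[ℂ] WithLp 2 (H₁ × H₂)) ∘L
    (K.prodMap L) ∘L
    ((WithLp.prodContinuousLinearEquiv 2 ℂ H₁ H₂) : WithLp 2 (H₁ × H₂) →L[ℂ] (H₁ × H₂))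

variable {H₁ H₂ : Type*}
  [NormedAddCommGroup H₁] [InnerProductSpace ℂ H₁] [CompleteSpace H₁]
  [TopologicalSpace.SeparableSpace H₁]
  [NormedAddCommGroup H₂] [InnerProductSpace ℂ H₂] [CompleteSpace H₂]
  [TopologicalSpace.SeparableSpace H₂]

/-- if `{xₙ ⊕ yₙ}` is an `M`-frame for `H₁ ⊕ H₂` with frame bounds `A, B`, where
`M(x ⊕ y) = M₁(x ⊕ y) ⊕ M₂(x ⊕ y)`, then
(i) `A‖M₁*(u)‖² ≤ ∑ₙ |⟨u, xₙ⟩|² ≤ B‖u‖²` for all `u ∈ H₁`, and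
(ii) `A‖M₂*(v)‖² ≤ ∑ₙ |⟨v, yₙ⟩|² ≤ B‖v‖²` for all `v ∈ H₂`. -/
theorem necessary_condition_M_frame
    (M : WithLp 2 (H₁ × H₂) →L[ℂ] WithLp 2 (H₁ × H₂))
    (M₁ : WithLp 2 (H₁ × H₂) →L[ℂ] H₁) (M₂ : WithLp 2 (H₁ × H₂) →L[ℂ] H₂)
    (hM : ∀ z : WithLp 2 (H₁ × H₂), M z = (WithLp.equiv 2 (H₁ × H₂)).symm (M₁ z, M₂ z))
    (x : ℕ → H₁) (y : ℕ → H₂) (A B : ℝ) (hA : 0 < A) (hB : 0 < B)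
    (hframe : ∀ z : WithLp 2 (H₁ × H₂),
      Summable (fun n => ‖(inner ℂ z (pairSeq x y n) : ℂ)‖ ^ 2) ∧
      A * ‖M.adjoint z‖ ^ 2 ≤ ∑' n, ‖(inner ℂ z (pairSeq x y n) : ℂ)‖ ^ 2 ∧
      ∑' n, ‖(inner ℂ z (pairSeq x y n) : ℂ)‖ ^ 2 ≤ B * ‖z‖ ^ 2) :
    (∀ u : H₁, Summable (fun n => ‖(inner ℂ u (x n) : ℂ)‖ ^ 2) ∧
      A * ‖M₁.adjoint u‖ ^ 2 ≤ ∑' n, ‖(inner ℂ u (x n) : ℂ)‖ ^ 2 ∧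
      ∑' n, ‖(inner ℂ u (x n) : ℂ)‖ ^ 2 ≤ B * ‖u‖ ^ 2) ∧
    (∀ v : H₂, Summable (fun n => ‖(inner ℂ v (y n) : ℂ)‖ ^ 2) ∧
      A * ‖M₂.adjoint v‖ ^ 2 ≤ ∑' n, ‖(inner ℂ v (y n) : ℂ)‖ ^ 2 ∧
      ∑' n, ‖(inner ℂ v (y n) : ℂ)‖ ^ 2 ≤ B * ‖v‖ ^ 2) := by
  have key1 : ∀ u : H₁, M.adjoint ((WithLp.equiv 2 (H₁ × H₂)).symm (u, 0)) = M₁.adjoint u := by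
    intro u
    apply ext_inner_right ℂ
    intro z
    rw [ContinuousLinearMap.adjoint_inner_left, ContinuousLinearMap.adjoint_inner_left, hM z]
    simp [WithLp.prod_inner_apply]
  have key2 : ∀ v : H₂, M.adjoint ((WithLp.equiv 2 (H₁ × H₂)).symm (0, v)) = M₂.adjoint v := by
    intro v
    apply ext_inner_right ℂ
    intro z
    rw [ContinuousLinearMap.adjoint_inner_left, ContinuousLinearMap.adjoint_inner_left, hM z]
    simp [WithLp.prod_inner_apply]
  constructor
  · intro u
    obtain ⟨hs, h1, h2⟩ := hframe ((WithLp.equiv 2 (H₁ × H₂)).symm (u, 0))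
    have hin : ∀ n, (inner ℂ ((WithLp.equiv 2 (H₁ × H₂)).symm (u, 0)) (pairSeq x y n) : ℂ)
        = inner ℂ u (x n) := by
      intro n
      simp [pairSeq, WithLp.prod_inner_apply]
    have hnorm : ‖(WithLp.equiv 2 (H₁ × H₂)).symm (u, (0 : H₂))‖ ^ 2 = ‖u‖ ^ 2 := by
      rw [WithLp.prod_norm_sq_eq_of_L2]; simp
    simp only [hin] at hs h1 h2
    rw [key1 u] at h1
    rw [hnorm] at h2
    exact ⟨hs, h1, h2⟩
  · intro v
    obtain ⟨hs, h1, h2⟩ := hframe ((WithLp.equiv 2 (H₁ × H₂)).symm (0, v))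
    have hin : ∀ n, (inner ℂ ((WithLp.equiv 2 (H₁ × H₂)).symm (0, v)) (pairSeq x y n) : ℂ)
        = inner ℂ v (y n) := by
      intro n
      simp [pairSeq, WithLp.prod_inner_apply]
    have hnorm : ‖(WithLp.equiv 2 (H₁ × H₂)).symm ((0 : H₁), v)‖ ^ 2 = ‖v‖ ^ 2 := by
      rw [WithLp.prod_norm_sq_eq_of_L2]; simp
    simp only [hin] at hs h1 h2
    rw [key2 v] at h1
    rw [hnorm] at h2
    exact ⟨hs, h1, h2⟩
end
end

section
/- Let K be a bounded operator on H₁ and L a bounded operator on H₂. If a sequence {xₙ ⊕ yₙ}ₙ≥1 in H₁ ⊕ H₂ is a K ⊕ L-frame for H₁ ⊕ H₂, then {xₙ}ₙ≥1 is a K-frame for H₁ and {yₙ}ₙ≥1 is an L-frame for H₂. -/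
noncomputable section

open scoped ENNReal

variable {H₁ H₂ : Type*}
  [NormedAddCommGroup H₁] [InnerProductSpace ℂ H₁] [CompleteSpace H₁]
  [TopologicalSpace.SeparableSpace H₁]
  [NormedAddCommGroup H₂] [InnerProductSpace ℂ H₂] [CompleteSpace H₂]
  [TopologicalSpace.SeparableSpace H₂]


set_option linter.unusedSectionVars false in
lemma dsum_apply_fst (K : H₁ →L[ℂ] H₁) (L : H₂ →L[ℂ] H₂) (u : WithLp 2 (H₁ × H₂)) :
    (dsum K L u).fst = K u.fst ∧ (dsum K L u).snd = L u.snd :=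
  ⟨rfl, rfl⟩

lemma dsum_adjoint (K : H₁ →L[ℂ] H₁) (L : H₂ →L[ℂ] H₂) :
    (dsum K L).adjoint = dsum K.adjoint L.adjoint := by
  symm
  rw [ContinuousLinearMap.eq_adjoint_iff]
  intro u w
  simp only [WithLp.prod_inner_apply]
  show (inner ℂ (K.adjoint u.fst) w.fst : ℂ) + inner ℂ (L.adjoint u.snd) w.snd
      = inner ℂ u.fst (K w.fst) + inner ℂ u.snd (L w.snd)
  rw [ContinuousLinearMap.adjoint_inner_left, ContinuousLinearMap.adjoint_inner_left]

/-- if `{xₙ ⊕ yₙ}` is a `K ⊕ L`-frame for `H₁ ⊕ H₂`, then `{xₙ}` is a `K`-frame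
for `H₁` and `{yₙ}` is an `L`-frame for `H₂`. -/
theorem kframe_of_pair_kframe (K : H₁ →L[ℂ] H₁) (L : H₂ →L[ℂ] H₂)
    (x : ℕ → H₁) (y : ℕ → H₂)
    (h : IsKFrame (dsum K L) (pairSeq x y)) :
    IsKFrame K x ∧ IsKFrame L y:= by
  obtain ⟨A, B, hA, hB, hf⟩ := h
  constructor
  · refine ⟨A, B, hA, hB, fun v => ?_⟩
    set w : WithLp 2 (H₁ × H₂) := (WithLp.equiv 2 (H₁ × H₂)).symm (v, 0) with hw
    have h1 : ∀ n, (inner ℂ w (pairSeq x y n) : ℂ) = inner ℂ v (x n) := by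
      intro n
      rw [WithLp.prod_inner_apply]
      show (inner ℂ v (x n) : ℂ) + inner ℂ (0 : H₂) (y n) = inner ℂ v (x n)
      simp
    have h2 : ‖w‖ ^ 2 = ‖v‖ ^ 2 := by
      rw [WithLp.prod_norm_sq_eq_of_L2]
      show ‖v‖ ^ 2 + ‖(0 : H₂)‖ ^ 2 = _
      simp
    have h3 : ‖(dsum K L).adjoint w‖ ^ 2 = ‖K.adjoint v‖ ^ 2 := by
      rw [dsum_adjoint, WithLp.prod_norm_sq_eq_of_L2,
        (dsum_apply_fst _ _ _).1, (dsum_apply_fst _ _ _).2]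
      show ‖K.adjoint v‖ ^ 2 + ‖L.adjoint (0 : H₂)‖ ^ 2 = _
      simp
    obtain ⟨hs, hl, hu⟩ := hf w
    simp only [h1] at hs hl hu
    rw [h3] at hl
    rw [h2] at hu
    exact ⟨hs, hl, hu⟩
  · refine ⟨A, B, hA, hB, fun v => ?_⟩
    set w : WithLp 2 (H₁ × H₂) := (WithLp.equiv 2 (H₁ × H₂)).symm (0, v) with hw
    have h1 : ∀ n, (inner ℂ w (pairSeq x y n) : ℂ) = inner ℂ v (y n) := by
      intro n
      rw [WithLp.prod_inner_apply]
      show (inner ℂ (0 : H₁) (x n) : ℂ) + inner ℂ v (y n) = inner ℂ v (y n)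
      simp
    have h2 : ‖w‖ ^ 2 = ‖v‖ ^ 2 := by
      rw [WithLp.prod_norm_sq_eq_of_L2]
      show ‖(0 : H₁)‖ ^ 2 + ‖v‖ ^ 2 = _
      simp
    have h3 : ‖(dsum K L).adjoint w‖ ^ 2 = ‖L.adjoint v‖ ^ 2 := by
      rw [dsum_adjoint, WithLp.prod_norm_sq_eq_of_L2,
        (dsum_apply_fst _ _ _).1, (dsum_apply_fst _ _ _).2]
      show ‖K.adjoint (0 : H₁)‖ ^ 2 + ‖L.adjoint v‖ ^ 2 = _
      simp
    obtain ⟨hs, hl, hu⟩ := hf w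
    simp only [h1] at hs hl hu
    rw [h3] at hl
    rw [h2] at hu
    exact ⟨hs, hl, hu⟩
end
end

section
/- Let K be a bounded operator on H₁ and L a bounded operator on H₂. Then there exist a K-frame {xₙ}ₙ≥1 for H₁ and an L-frame {yₙ}ₙ≥1 for H₂ such that {xₙ ⊕ yₙ}ₙ≥1 is a K ⊕ L-frame for H₁ ⊕ H₂. -/
noncomputable section

open scoped ENNReal

/-- A Parseval sequence. -/
def IsParseval {H : Type*} [NormedAddCommGroup H] [InnerProductSpace ℂ H] (x : ℕ → H) : Prop :=
  ∀ v : H, Summable (fun n => ‖(inner ℂ v (x n) : ℂ)‖ ^ 2) ∧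
    ∑' n, ‖(inner ℂ v (x n) : ℂ)‖ ^ 2 = ‖v‖ ^ 2

lemma exists_parseval (H : Type*) [NormedAddCommGroup H] [InnerProductSpace ℂ H]
    [CompleteSpace H] [TopologicalSpace.SeparableSpace H] :
    ∃ x : ℕ → H, IsParseval x := by
  classical
  obtain ⟨w, b, hb⟩ := exists_hilbertBasis ℂ H
  have horth := b.orthonormal
  have hone : ∀ i j : w, (inner ℂ (b i) (b j) : ℂ) = if i = j then 1 else 0 :=
    orthonormal_iff_ite.mp horth
  have hdist : ∀ i j : w, i ≠ j → (1 : ℝ) ≤ dist (b i) (b j) := by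
    intro i j hij
    have h0 : (inner ℂ (b i) (b j) : ℂ) = 0 := by simp [hone i j, hij]
    have hni : ‖b i‖ = 1 := horth.1 i
    have hnj : ‖b j‖ = 1 := horth.1 j
    have hsq : ‖b i - b j‖ ^ 2 = 2 := by
      rw [@norm_sub_sq ℂ, h0, hni, hnj]; norm_num
    rw [dist_eq_norm]
    nlinarith [norm_nonneg (b i - b j)]
  have hcount : Countable w := by
    refine Pairwise.countable_of_isOpen_disjoint
      (s := fun i : w => Metric.ball (b i) 2⁻¹) ?_ (fun i => Metric.isOpen_ball)
      (fun i => Metric.nonempty_ball.2 (by norm_num))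
    intro i j hij
    refine Metric.ball_disjoint_ball ?_
    rw [show (2:ℝ)⁻¹ + 2⁻¹ = 1 by norm_num]
    exact hdist i j hij
  obtain ⟨f, hf⟩ := Countable.exists_injective_nat w
  refine ⟨Function.extend f (fun i => b i) 0, fun v => ?_⟩
  set g : ℕ → ℝ := fun n => ‖(inner ℂ v (Function.extend f (fun i => b i) 0 n) : ℂ)‖ ^ 2 with hg
  have hsupp : ∀ n ∉ Set.range f, g n = 0 := by
    intro n hn
    have : Function.extend f (fun i => b i) 0 n = 0 :=
      Function.extend_apply' _ _ _ (by simpa [Set.range] using hn)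
    simp [hg, this]
  have hcomp : ∀ i : w, g (f i) = ‖(inner ℂ v (b i) : ℂ)‖ ^ 2 := by
    intro i; simp [hg, hf.extend_apply]
  -- Parseval over w
  have hrepr : ∀ i : w, ‖(inner ℂ v (b i) : ℂ)‖ = ‖b.repr v i‖ := by
    intro i
    rw [b.repr_apply_apply, ← norm_inner_symm]
  have hmem := lp.memℓp (b.repr v)
  have hsum_w : Summable (fun i : w => ‖b.repr v i‖ ^ 2) := by
    have := hmem.summable (by norm_num : 0 < (2 : ℝ≥0∞).toReal)
    have h2 : (2 : ℝ≥0∞).toReal = ((2 : ℕ) : ℝ) := by norm_num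
    simpa [h2, Real.rpow_natCast] using this
  have htsum_w : ∑' i : w, ‖b.repr v i‖ ^ 2 = ‖v‖ ^ 2 := by
    have := lp.norm_rpow_eq_tsum (by norm_num : 0 < (2 : ℝ≥0∞).toReal) (b.repr v)
    have h2 : (2 : ℝ≥0∞).toReal = ((2 : ℕ) : ℝ) := by norm_num
    rw [h2] at this
    simp only [Real.rpow_natCast] at this
    rw [← this, b.repr.norm_map]
  have hsum_comp : Summable (g ∘ f) := by
    have : (g ∘ f) = fun i : w => ‖b.repr v i‖ ^ 2 := by
      funext i; simp [Function.comp, hcomp i, hrepr i]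
    rw [this]; exact hsum_w
  have hsummable : Summable g := (hf.summable_iff hsupp).mp hsum_comp
  have htsum : ∑' n, g n = ‖v‖ ^ 2 := by
    have heq : ∑' i : w, g (f i) = ∑' n, g n := by
      refine hf.tsum_eq ?_
      intro n hn
      by_contra hcontra
      exact hn (by simpa using hsupp n (by simpa [Set.range] using hcontra))
    rw [← heq]
    calc ∑' i : w, g (f i) = ∑' i : w, ‖b.repr v i‖ ^ 2 := by
          congr 1; funext i; rw [hcomp i, hrepr i]
      _ = ‖v‖ ^ 2 := htsum_w
  exact ⟨hsummable, htsum⟩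

lemma isKFrame_of_parseval {H : Type*} [NormedAddCommGroup H] [InnerProductSpace ℂ H]
    [CompleteSpace H] {K : H →L[ℂ] H} {x : ℕ → H} (h : IsParseval x) : IsKFrame K x := by
  set c : ℝ := ‖K.adjoint‖ + 1 with hc
  have hcpos : 0 < c := by positivity
  refine ⟨c⁻¹ ^ 2, 1, by positivity, one_pos, fun v => ⟨(h v).1, ?_, ?_⟩⟩
  · rw [(h v).2]
    have h1 := K.adjoint.le_opNorm v
    have h5 : c⁻¹ * ‖K.adjoint v‖ ≤ ‖v‖ := by
      rw [inv_mul_le_iff₀ hcpos]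
      calc ‖K.adjoint v‖ ≤ ‖K.adjoint‖ * ‖v‖ := h1
        _ ≤ c * ‖v‖ := by nlinarith [norm_nonneg v]
    have h6 : 0 ≤ c⁻¹ * ‖K.adjoint v‖ := by positivity
    nlinarith [h5, h6]
  · rw [(h v).2, one_mul]

lemma parseval_extend {H : Type*} [NormedAddCommGroup H] [InnerProductSpace ℂ H]
    {x : ℕ → H} (h : IsParseval x) {e : ℕ → ℕ} (he : Function.Injective e) :
    IsParseval (Function.extend e x 0) := by
  intro v
  set g : ℕ → ℝ := fun n => ‖(inner ℂ v (Function.extend e x 0 n) : ℂ)‖ ^ 2 with hg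
  have hsupp : ∀ n ∉ Set.range e, g n = 0 := by
    intro n hn
    have : Function.extend e x 0 n = 0 :=
      Function.extend_apply' _ _ _ (by simpa [Set.range] using hn)
    simp [hg, this]
  have hcomp : ∀ k, g (e k) = ‖(inner ℂ v (x k) : ℂ)‖ ^ 2 := by
    intro k; simp [hg, he.extend_apply]
  have hsum_comp : Summable (g ∘ e) := by
    have : (g ∘ e) = fun k => ‖(inner ℂ v (x k) : ℂ)‖ ^ 2 := by
      funext k; simp [Function.comp, hcomp k]
    rw [this]; exact (h v).1
  refine ⟨(he.summable_iff hsupp).mp hsum_comp, ?_⟩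
  have heq : ∑' k, g (e k) = ∑' n, g n := by
    refine he.tsum_eq ?_
    intro n hn
    by_contra hcontra
    exact hn (by simpa using hsupp n (by simpa [Set.range] using hcontra))
  rw [← heq]
  calc ∑' k, g (e k) = ∑' k, ‖(inner ℂ v (x k) : ℂ)‖ ^ 2 := by
        congr 1; funext k; exact hcomp k
    _ = ‖v‖ ^ 2 := (h v).2

variable {H₁ H₂ : Type*}
  [NormedAddCommGroup H₁] [InnerProductSpace ℂ H₁] [CompleteSpace H₁]
  [TopologicalSpace.SeparableSpace H₁]
  [NormedAddCommGroup H₂] [InnerProductSpace ℂ H₂] [CompleteSpace H₂]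
  [TopologicalSpace.SeparableSpace H₂]

/-- for any bounded operators `K` on `H₁` and `L` on `H₂`, there exist a
`K`-frame `{xₙ}` for `H₁` and an `L`-frame `{yₙ}` for `H₂` such that `{xₙ ⊕ yₙ}` is a
`K ⊕ L`-frame for `H₁ ⊕ H₂`. -/
theorem exists_pair_kframe (K : H₁ →L[ℂ] H₁) (L : H₂ →L[ℂ] H₂) :
    ∃ (x : ℕ → H₁) (y : ℕ → H₂),
      IsKFrame K x ∧ IsKFrame L y ∧ IsKFrame (dsum K L) (pairSeq x y) := by
  obtain ⟨xP, hxP⟩ := exists_parseval H₁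
  obtain ⟨yP, hyP⟩ := exists_parseval H₂
  set x : ℕ → H₁ := Function.extend (fun k => 2 * k) xP 0 with hxdef
  set y : ℕ → H₂ := Function.extend (fun k => 2 * k + 1) yP 0 with hydef
  have he1 : Function.Injective (fun k : ℕ => 2 * k) := fun a b h => by simp only at h; omega
  have he2 : Function.Injective (fun k : ℕ => 2 * k + 1) := fun a b h => by simp only at h; omega
  have hx : IsParseval x := parseval_extend hxP he1
  have hy : IsParseval y := parseval_extend hyP he2
  -- for each n, either x n = 0 or y n = 0
  have hzero : ∀ n : ℕ, x n = 0 ∨ y n = 0 := by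
    intro n
    rcases Nat.even_or_odd n with h | h
    · right
      refine Function.extend_apply' _ _ _ ?_
      rintro ⟨k, hk⟩; obtain ⟨m, hm⟩ := h; omega
    · left
      refine Function.extend_apply' _ _ _ ?_
      rintro ⟨k, hk⟩; obtain ⟨m, hm⟩ := h; omega
  have hpair : IsParseval (pairSeq x y) := by
    intro v
    have hinner : ∀ n, (inner ℂ v (pairSeq x y n) : ℂ)
        = inner ℂ v.fst (x n) + inner ℂ v.snd (y n) := by
      intro n
      rw [pairSeq, WithLp.prod_inner_apply]
      congr 1
    have hptwise : ∀ n, ‖(inner ℂ v (pairSeq x y n) : ℂ)‖ ^ 2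
        = ‖(inner ℂ v.fst (x n) : ℂ)‖ ^ 2 + ‖(inner ℂ v.snd (y n) : ℂ)‖ ^ 2 := by
      intro n
      rcases hzero n with h | h <;> rw [hinner n] <;> simp [h]
    have hs1 := (hx v.fst).1
    have hs2 := (hy v.snd).1
    constructor
    · simpa only [hptwise] using hs1.add hs2
    · calc ∑' n, ‖(inner ℂ v (pairSeq x y n) : ℂ)‖ ^ 2
          = ∑' n, (‖(inner ℂ v.fst (x n) : ℂ)‖ ^ 2 + ‖(inner ℂ v.snd (y n) : ℂ)‖ ^ 2) := by
            congr 1; funext n; exact hptwise n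
        _ = (∑' n, ‖(inner ℂ v.fst (x n) : ℂ)‖ ^ 2) + ∑' n, ‖(inner ℂ v.snd (y n) : ℂ)‖ ^ 2 :=
            hs1.tsum_add hs2
        _ = ‖v.fst‖ ^ 2 + ‖v.snd‖ ^ 2 := by rw [(hx v.fst).2, (hy v.snd).2]
        _ = ‖v‖ ^ 2 := (WithLp.prod_norm_sq_eq_of_L2 v).symm
  exact ⟨x, y, isKFrame_of_parseval hx, isKFrame_of_parseval hy, isKFrame_of_parseval hpair⟩
end
end

section
/- Let H be a separable complex Hilbert space, let K and L be bounded operators on H, and let {xₙ}ₙ≥1 be a Bessel sequence in H. Then {xₙ ⊕ xₙ}ₙ≥1 is a K ⊕ L-frame for the super Hilbert space H ⊕ H if and only if K = 0 and L = 0. -/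
noncomputable section

open scoped ENNReal

variable {H₁ H₂ : Type*}
  [NormedAddCommGroup H₁] [InnerProductSpace ℂ H₁] [CompleteSpace H₁]
  [TopologicalSpace.SeparableSpace H₁]
  [NormedAddCommGroup H₂] [InnerProductSpace ℂ H₂] [CompleteSpace H₂]
  [TopologicalSpace.SeparableSpace H₂]

lemma dsum_apply' {H : Type*} [NormedAddCommGroup H] [InnerProductSpace ℂ H]
    (K L : H →L[ℂ] H) (a b : H) :
    dsum K L ((WithLp.equiv 2 (H × H)).symm (a, b))
      = (WithLp.equiv 2 (H × H)).symm (K a, L b) := rfl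

lemma dsum_zero' {H : Type*} [NormedAddCommGroup H] [InnerProductSpace ℂ H] :
    dsum (0 : H →L[ℂ] H) (0 : H →L[ℂ] H) = 0 := by
  ext v
  rfl

/-- for a Bessel sequence `{xₙ}` in `H`, the sequence `{xₙ ⊕ xₙ}` is a
`K ⊕ L`-frame for the super Hilbert space `H ⊕ H` iff `K = 0` and `L = 0`. -/
theorem diag_pair_kframe_iff {H : Type*}
    [NormedAddCommGroup H] [InnerProductSpace ℂ H] [CompleteSpace H]
    [TopologicalSpace.SeparableSpace H]
    (K L : H →L[ℂ] H) (x : ℕ → H) (hx : IsBessel x) :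
    IsKFrame (dsum K L) (pairSeq x x) ↔ K = 0 ∧ L = 0 := by
  constructor
  · rintro ⟨A, B, hA, hB, hv⟩
    have hT : ∀ u : H, (dsum K L).adjoint ((WithLp.equiv 2 (H × H)).symm (u, -u)) = 0 := by
      intro u
      set v := (WithLp.equiv 2 (H × H)).symm (u, -u) with hvdef
      have hzero : ∀ n, ‖(inner ℂ v (pairSeq x x n) : ℂ)‖ ^ 2 = 0 := by
        intro n
        have : (inner ℂ v (pairSeq x x n) : ℂ) = 0 := by
          rw [hvdef, pairSeq, WithLp.prod_inner_apply]
          simp [inner_neg_left]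
        simp [this]
      obtain ⟨_, hlow, _⟩ := hv v
      have hts : ∑' n, ‖(inner ℂ v (pairSeq x x n) : ℂ)‖ ^ 2 = 0 :=
        (tsum_congr hzero).trans tsum_zero
      rw [hts] at hlow
      have h5 : ‖(dsum K L).adjoint v‖ ^ 2 ≤ 0 := by nlinarith
      have h6 : ‖(dsum K L).adjoint v‖ ^ 2 = 0 := le_antisymm h5 (sq_nonneg _)
      exact norm_eq_zero.mp ((pow_eq_zero_iff (by norm_num : (2:ℕ) ≠ 0)).mp h6)
    have hinner : ∀ u h : H, (inner ℂ u (K h) : ℂ) = 0 ∧ (inner ℂ u (L h) : ℂ) = 0 := by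
      intro u h
      have e1 : (inner ℂ ((WithLp.equiv 2 (H × H)).symm (u, -u))
          (dsum K L ((WithLp.equiv 2 (H × H)).symm (h, 0))) : ℂ) = 0 := by
        rw [← ContinuousLinearMap.adjoint_inner_left, hT u, inner_zero_left]
      have e2 : (inner ℂ ((WithLp.equiv 2 (H × H)).symm (u, -u))
          (dsum K L ((WithLp.equiv 2 (H × H)).symm (0, h))) : ℂ) = 0 := by
        rw [← ContinuousLinearMap.adjoint_inner_left, hT u, inner_zero_left]
      rw [dsum_apply', WithLp.prod_inner_apply] at e1 e2
      simp only [WithLp.equiv_symm_apply, WithLp.ofLp_toLp, map_zero, inner_zero_right,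
        inner_neg_left, add_zero, zero_add] at e1 e2
      constructor
      · exact e1
      · linear_combination -e2
    constructor
    · ext h
      exact inner_self_eq_zero.mp (hinner (K h) h).1
    · ext h
      exact inner_self_eq_zero.mp (hinner (L h) h).2
  · rintro ⟨rfl, rfl⟩
    obtain ⟨B, hB, hBv⟩ := hx
    refine ⟨1, 2 * B, one_pos, by positivity, fun v => ?_⟩
    have hkey : ∀ n, ‖(inner ℂ v (pairSeq x x n) : ℂ)‖ ^ 2
        ≤ 2 * (‖(inner ℂ v.fst (x n) : ℂ)‖ ^ 2 + ‖(inner ℂ v.snd (x n) : ℂ)‖ ^ 2) := by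
      intro n
      have : (inner ℂ v (pairSeq x x n) : ℂ)
          = inner ℂ v.fst (x n) + inner ℂ v.snd (x n) := by
        rw [pairSeq, WithLp.prod_inner_apply]
        rfl
      rw [this]
      set a : ℂ := inner ℂ v.fst (x n)
      set b : ℂ := inner ℂ v.snd (x n)
      nlinarith [mul_self_le_mul_self (norm_nonneg (a + b)) (norm_add_le a b),
        sq_nonneg (‖a‖ - ‖b‖), norm_nonneg a, norm_nonneg b]
    obtain ⟨hs1, hb1⟩ := hBv v.fst
    obtain ⟨hs2, hb2⟩ := hBv v.snd
    have hsdom : Summable (fun n => 2 * (‖(inner ℂ v.fst (x n) : ℂ)‖ ^ 2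
        + ‖(inner ℂ v.snd (x n) : ℂ)‖ ^ 2)) := ((hs1.add hs2).mul_left 2)
    have hsum : Summable (fun n => ‖(inner ℂ v (pairSeq x x n) : ℂ)‖ ^ 2) :=
      Summable.of_nonneg_of_le (fun n => by positivity) hkey hsdom
    refine ⟨hsum, ?_, ?_⟩
    · have : (dsum (0 : H →L[ℂ] H) 0).adjoint v = 0 := by
        rw [dsum_zero', map_zero]; rfl
      rw [this]
      simp only [norm_zero]
      exact le_trans (by norm_num) (tsum_nonneg (fun n => by positivity))
    · calc ∑' n, ‖(inner ℂ v (pairSeq x x n) : ℂ)‖ ^ 2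
          ≤ ∑' n, 2 * (‖(inner ℂ v.fst (x n) : ℂ)‖ ^ 2 + ‖(inner ℂ v.snd (x n) : ℂ)‖ ^ 2) :=
            Summable.tsum_le_tsum hkey hsum hsdom
        _ = 2 * ((∑' n, ‖(inner ℂ v.fst (x n) : ℂ)‖ ^ 2)
            + ∑' n, ‖(inner ℂ v.snd (x n) : ℂ)‖ ^ 2) := by
            rw [tsum_mul_left, Summable.tsum_add hs1 hs2]
        _ ≤ 2 * B * ‖v‖ ^ 2 := by
            rw [WithLp.prod_norm_sq_eq_of_L2]
            nlinarith
end
end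

section
/- Let K be a bounded operator on H₁ and L a bounded operator on H₂. Let {xₙ}ₙ≥1 be a K-frame for H₁ and {yₙ}ₙ≥1 an L-frame for H₂, with analysis operators θ₁ and θ₂ respectively. If the range of θ₁ is orthogonal to the range of θ₂ in ℓ², then {xₙ ⊕ yₙ}ₙ≥1 is a K ⊕ L-frame for H₁ ⊕ H₂. -/
noncomputable section

open scoped ENNReal

variable {H₁ H₂ : Type*}
  [NormedAddCommGroup H₁] [InnerProductSpace ℂ H₁] [CompleteSpace H₁]
  [TopologicalSpace.SeparableSpace H₁]
  [NormedAddCommGroup H₂] [InnerProductSpace ℂ H₂] [CompleteSpace H₂]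
  [TopologicalSpace.SeparableSpace H₂]

/-- if `{xₙ}` is a `K`-frame for `H₁` and `{yₙ}` is an `L`-frame for `H₂` whose
analysis operators `θ₁, θ₂` have orthogonal ranges in `ℓ²`, then `{xₙ ⊕ yₙ}` is a
`K ⊕ L`-frame for `H₁ ⊕ H₂`. -/
theorem pair_kframe_of_orthogonal_ranges (K : H₁ →L[ℂ] H₁) (L : H₂ →L[ℂ] H₂)
    (x : ℕ → H₁) (y : ℕ → H₂)
    (hx : IsKFrame K x) (hy : IsKFrame L y)
    (θ₁ : H₁ → lp (fun _ : ℕ => ℂ) 2)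
    (hθ₁ : ∀ (u : H₁) (n : ℕ), θ₁ u n = (inner ℂ u (x n) : ℂ))
    (θ₂ : H₂ → lp (fun _ : ℕ => ℂ) 2)
    (hθ₂ : ∀ (v : H₂) (n : ℕ), θ₂ v n = (inner ℂ v (y n) : ℂ))
    (horth : ∀ (u : H₁) (v : H₂), (inner ℂ (θ₁ u) (θ₂ v) : ℂ) = 0) :
    IsKFrame (dsum K L) (pairSeq x y) := by
  obtain ⟨A₁, B₁, hA₁, hB₁, h₁⟩ := hx
  obtain ⟨A₂, B₂, hA₂, hB₂, h₂⟩ := hy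
  refine ⟨min A₁ A₂, B₁ + B₂, lt_min hA₁ hA₂, by positivity, fun w => ?_⟩
  set u : H₁ := w.fst
  set v : H₂ := w.snd
  obtain ⟨hs₁, hl₁, hu₁⟩ := h₁ u
  obtain ⟨hs₂, hl₂, hu₂⟩ := h₂ v
  set a : ℕ → ℂ := fun n => inner ℂ u (x n) with ha
  set b : ℕ → ℂ := fun n => inner ℂ v (y n) with hb
  have hinner : ∀ n, (inner ℂ w (pairSeq x y n) : ℂ) = a n + b n := by
    intro n
    rw [WithLp.prod_inner_apply]
    rfl
  -- cross term: summable and has sum 0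
  have hcs : HasSum (fun n => (starRingEnd ℂ) (a n) * b n) 0 := by
    have := lp.hasSum_inner (𝕜 := ℂ) (θ₁ u) (θ₂ v)
    rw [horth u v] at this
    convert this using 2 with n
    · rfl
    simp [ha, hb, hθ₁, hθ₂, RCLike.inner_apply, mul_comm]
  have hre : HasSum (fun n => ((starRingEnd ℂ) (a n) * b n).re) 0 := by
    simpa using hcs.mapL Complex.reCLM
  have hpt : ∀ n, ‖a n + b n‖ ^ 2
      = ‖a n‖ ^ 2 + (2 * ((starRingEnd ℂ) (a n) * b n).re + ‖b n‖ ^ 2) := by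
    intro n
    have := norm_add_sq (𝕜 := ℂ) (a n) (b n)
    simp only [RCLike.inner_apply] at this
    simp only [RCLike.re_to_complex] at this
    rw [this]; ring
  have hS : HasSum (fun n => ‖(inner ℂ w (pairSeq x y n) : ℂ)‖ ^ 2)
      ((∑' n, ‖a n‖ ^ 2) + (2 * 0 + ∑' n, ‖b n‖ ^ 2)) := by
    have h := hs₁.hasSum.add (((hre.mul_left 2)).add hs₂.hasSum)
    change HasSum (fun n => ‖a n‖ ^ 2 + (2 * ((starRingEnd ℂ) (a n) * b n).re + ‖b n‖ ^ 2)) ((∑' n, ‖a n‖ ^ 2) + (2 * 0 + ∑' n, ‖b n‖ ^ 2)) at h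
    simp only [← hpt] at h
    simpa only [hinner] using h
  have htsum : ∑' n, ‖(inner ℂ w (pairSeq x y n) : ℂ)‖ ^ 2
      = (∑' n, ‖a n‖ ^ 2) + ∑' n, ‖b n‖ ^ 2 := by
    simpa using hS.tsum_eq
  refine ⟨hS.summable, ?_, ?_⟩
  · rw [htsum, dsum_adjoint]
    have hnorm : ‖dsum K.adjoint L.adjoint w‖ ^ 2
        = ‖K.adjoint u‖ ^ 2 + ‖L.adjoint v‖ ^ 2 := by
      rw [WithLp.prod_norm_sq_eq_of_L2]
      rfl
    rw [hnorm]
    have h1 : min A₁ A₂ * ‖K.adjoint u‖ ^ 2 ≤ A₁ * ‖K.adjoint u‖ ^ 2 :=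
      mul_le_mul_of_nonneg_right (min_le_left _ _) (by positivity)
    have h2 : min A₁ A₂ * ‖L.adjoint v‖ ^ 2 ≤ A₂ * ‖L.adjoint v‖ ^ 2 :=
      mul_le_mul_of_nonneg_right (min_le_right _ _) (by positivity)
    nlinarith [hl₁, hl₂]
  · rw [htsum]
    have hw : ‖u‖ ^ 2 + ‖v‖ ^ 2 = ‖w‖ ^ 2 := (WithLp.prod_norm_sq_eq_of_L2 w).symm
    have h1 : B₁ * ‖u‖ ^ 2 ≤ B₁ * ‖w‖ ^ 2 := by nlinarith [sq_nonneg ‖v‖]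
    have h2 : B₂ * ‖v‖ ^ 2 ≤ B₂ * ‖w‖ ^ 2 := by nlinarith [sq_nonneg ‖u‖]
    nlinarith [hu₁, hu₂]
end
end

section
/- Let K be a bounded operator on H₁ and L a bounded operator on H₂. Let {xₙ}ₙ≥1 be a K-frame for H₁ and {yₙ}ₙ≥1 an L-frame for H₂, with synthesis operators T₁ and T₂ respectively. If {xₙ ⊕ yₙ}ₙ≥1 is a K ⊕ L-frame for H₁ ⊕ H₂, then R(K) ⊆ T₁(N(T₂)) and R(L) ⊆ T₂(N(T₁)), where R denotes range and N denotes kernel. -/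
noncomputable section

open scoped ENNReal

variable {H₁ H₂ : Type*}
  [NormedAddCommGroup H₁] [InnerProductSpace ℂ H₁] [CompleteSpace H₁]
  [TopologicalSpace.SeparableSpace H₁]
  [NormedAddCommGroup H₂] [InnerProductSpace ℂ H₂] [CompleteSpace H₂]
  [TopologicalSpace.SeparableSpace H₂]

set_option maxHeartbeats 1000000 in
lemma aux_key (K : H₁ →L[ℂ] H₁) (L : H₂ →L[ℂ] H₂)
    (x : ℕ → H₁) (y : ℕ → H₂)
    (T₁ : lp (fun _ : ℕ => ℂ) 2 →L[ℂ] H₁)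
    (hT₁ : ∀ a : lp (fun _ : ℕ => ℂ) 2, HasSum (fun n => a n • x n) (T₁ a))
    (T₂ : lp (fun _ : ℕ => ℂ) 2 →L[ℂ] H₂)
    (hT₂ : ∀ a : lp (fun _ : ℕ => ℂ) 2, HasSum (fun n => a n • y n) (T₂ a))
    (h : IsKFrame (dsum K L) (pairSeq x y)) (m : WithLp 2 (H₁ × H₂)) :
    ∃ a : lp (fun _ : ℕ => ℂ) 2,
      T₁ a = K ((WithLp.equiv 2 (H₁ × H₂)) m).1 ∧
      T₂ a = L ((WithLp.equiv 2 (H₁ × H₂)) m).2 := by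
  classical
  obtain ⟨A, B, hA, hB, hfr⟩ := h
  set z : ℕ → WithLp 2 (H₁ × H₂) := pairSeq x y with hz
  -- membership of the analysis sequence
  have memθ : ∀ w : WithLp 2 (H₁ × H₂), Memℓp (fun n => (inner ℂ (z n) w : ℂ)) 2 := by
    intro w
    apply memℓp_gen
    have := (hfr w).1
    have heq : (fun n => ‖(inner ℂ (z n) w : ℂ)‖ ^ ((2:ℝ≥0∞)).toReal)
        = fun n => ‖(inner ℂ w (z n) : ℂ)‖ ^ 2 := by
      funext n
      rw [norm_inner_symm]
      norm_num [Real.rpow_natCast]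
    rw [heq]
    exact this
  -- the analysis operator
  set Θ : WithLp 2 (H₁ × H₂) →ₗ[ℂ] lp (fun _ : ℕ => ℂ) 2 :=
    { toFun := fun w => ⟨fun n => (inner ℂ (z n) w : ℂ), memθ w⟩
      map_add' := by
        intro w w'
        apply lp.ext
        funext n
        show (inner ℂ (z n) (w + w') : ℂ) = (inner ℂ (z n) w : ℂ) + (inner ℂ (z n) w' : ℂ)
        exact inner_add_right _ _ _
      map_smul' := by
        intro c w
        apply lp.ext
        funext n
        show (inner ℂ (z n) (c • w) : ℂ) = c * (inner ℂ (z n) w : ℂ)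
        exact inner_smul_right _ _ _ } with hΘdef
  have Θ_apply : ∀ (w : WithLp 2 (H₁ × H₂)) (n : ℕ), (Θ w) n = (inner ℂ (z n) w : ℂ) := fun w n => rfl
  -- norm of Θ w
  have hnorm : ∀ w : WithLp 2 (H₁ × H₂), ‖Θ w‖ ^ 2 = ∑' n, ‖(inner ℂ w (z n) : ℂ)‖ ^ 2 := by
    intro w
    have h2 : (0:ℝ) < ((2:ℝ≥0∞)).toReal := by norm_num
    have := lp.norm_rpow_eq_tsum h2 (Θ w)
    have hl : ‖Θ w‖ ^ ((2:ℝ≥0∞)).toReal = ‖Θ w‖ ^ (2:ℕ) := by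
      norm_num [Real.rpow_natCast]
    have hr : (fun n => ‖(Θ w) n‖ ^ ((2:ℝ≥0∞)).toReal)
        = fun n => ‖(inner ℂ w (z n) : ℂ)‖ ^ (2:ℕ) := by
      funext n
      rw [Θ_apply, norm_inner_symm]
      norm_num [Real.rpow_natCast]
    rw [hl, hr] at this
    exact this
  -- lower bound
  have lower : ∀ w : WithLp 2 (H₁ × H₂), Real.sqrt A * ‖(dsum K L).adjoint w‖ ≤ ‖Θ w‖ := by
    intro w
    have h1 : A * ‖(dsum K L).adjoint w‖ ^ 2 ≤ ‖Θ w‖ ^ 2 := by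
      rw [hnorm]; exact (hfr w).2.1
    have := Real.sqrt_le_sqrt h1
    rwa [Real.sqrt_mul hA.le, Real.sqrt_sq (norm_nonneg _), Real.sqrt_sq (norm_nonneg _)] at this
  -- the synthesis operator identity
  have key : ∀ (a : lp (fun _ : ℕ => ℂ) 2) (w : WithLp 2 (H₁ × H₂)),
      (inner ℂ a (Θ w) : ℂ)
        = (inner ℂ ((WithLp.equiv 2 (H₁ × H₂)).symm (T₁ a, T₂ a) : WithLp 2 (H₁ × H₂)) w : ℂ) := by
    intro a w
    have hs : HasSum (fun n => a n • z n)
        ((WithLp.equiv 2 (H₁ × H₂)).symm (T₁ a, T₂ a) : WithLp 2 (H₁ × H₂)) := by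
      have h0 : HasSum (fun n => (a n • x n, a n • y n)) (T₁ a, T₂ a) :=
        (hT₁ a).prodMk (hT₂ a)
      have := h0.mapL
        ((WithLp.prodContinuousLinearEquiv 2 ℂ H₁ H₂).symm : (H₁ × H₂) →L[ℂ] WithLp 2 (H₁ × H₂))
      convert this using 1 <;> rfl
    have hs2 : HasSum (fun n => (inner ℂ (a n • z n) w : ℂ))
        (inner ℂ ((WithLp.equiv 2 (H₁ × H₂)).symm (T₁ a, T₂ a) : WithLp 2 (H₁ × H₂)) w : ℂ) := by
      have hcont : Continuous fun v : WithLp 2 (H₁ × H₂) => (inner ℂ v w : ℂ) :=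
        Continuous.inner continuous_id continuous_const
      exact hs.map (AddMonoidHom.mk' (fun v : WithLp 2 (H₁ × H₂) => (inner ℂ v w : ℂ))
        (fun p q => inner_add_left p q w)) hcont
    rw [lp.inner_eq_tsum, ← hs2.tsum_eq]
    apply tsum_congr
    intro n
    rw [Θ_apply, inner_smul_left]
    simp [RCLike.inner_apply]
    ring
  -- the target vector
  set v : WithLp 2 (H₁ × H₂) := dsum K L m with hv
  set c : ℝ := ‖m‖ / Real.sqrt A with hc
  have hbound : ∀ w : WithLp 2 (H₁ × H₂), ‖(inner ℂ v w : ℂ)‖ ≤ c * ‖Θ w‖ := by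
    intro w
    have h1 : (inner ℂ v w : ℂ) = inner ℂ m ((dsum K L).adjoint w) := by
      rw [ContinuousLinearMap.adjoint_inner_right]
    rw [h1]
    calc ‖(inner ℂ m ((dsum K L).adjoint w) : ℂ)‖
        ≤ ‖m‖ * ‖(dsum K L).adjoint w‖ := norm_inner_le_norm _ _
      _ ≤ ‖m‖ * (‖Θ w‖ / Real.sqrt A) := by
          apply mul_le_mul_of_nonneg_left _ (norm_nonneg m)
          rw [le_div_iff₀ (Real.sqrt_pos.2 hA)]
          rw [mul_comm]
          exact lower w
      _ = c * ‖Θ w‖ := by rw [hc]; ring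
  -- Hahn-Banach setup
  have hker : LinearMap.ker Θ ≤ LinearMap.ker ((innerSL ℂ v : WithLp 2 (H₁ × H₂) →L[ℂ] ℂ) : WithLp 2 (H₁ × H₂) →ₗ[ℂ] ℂ) := by
    intro w hw
    have hΘw : Θ w = 0 := hw
    have : ‖(inner ℂ v w : ℂ)‖ ≤ c * ‖Θ w‖ := hbound w
    rw [hΘw, norm_zero, mul_zero] at this
    have : (inner ℂ v w : ℂ) = 0 := norm_le_zero_iff.1 this
    simpa [LinearMap.mem_ker] using this
  set f₀ : (LinearMap.range Θ) →ₗ[ℂ] ℂ :=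
    (Submodule.liftQ (LinearMap.ker Θ) ((innerSL ℂ v : WithLp 2 (H₁ × H₂) →L[ℂ] ℂ) : WithLp 2 (H₁ × H₂) →ₗ[ℂ] ℂ) hker).comp
      (LinearMap.quotKerEquivRange Θ).symm.toLinearMap with hf₀def
  have hf₀ : ∀ (w : WithLp 2 (H₁ × H₂)) (hw : Θ w ∈ LinearMap.range Θ),
      f₀ ⟨Θ w, hw⟩ = (inner ℂ v w : ℂ) := by
    intro w hw
    rw [hf₀def]
    simp only [LinearMap.comp_apply, LinearEquiv.coe_toLinearMap]
    rw [LinearMap.quotKerEquivRange_symm_apply_image Θ w hw]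
    simp [Submodule.liftQ_apply]
  have hbd : ∀ m' : LinearMap.range Θ, ‖f₀ m'‖ ≤ c * ‖m'‖ := by
    rintro ⟨m', ⟨w, rfl⟩⟩
    rw [hf₀ w ⟨w, rfl⟩]
    exact hbound w
  set fc : (LinearMap.range Θ : Submodule ℂ (lp (fun _ : ℕ => ℂ) 2)) →L[ℂ] ℂ := LinearMap.mkContinuous f₀ c hbd
  obtain ⟨g, hg, -⟩ := exists_extension_norm_eq (LinearMap.range Θ) fc
  set a : lp (fun _ : ℕ => ℂ) 2 := (InnerProductSpace.toDual ℂ (lp (fun _ : ℕ => ℂ) 2)).symm g with ha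
  refine ⟨a, ?_⟩
  have hkey2 : ∀ w : WithLp 2 (H₁ × H₂),
      (inner ℂ ((WithLp.equiv 2 (H₁ × H₂)).symm (T₁ a, T₂ a) : WithLp 2 (H₁ × H₂)) w : ℂ) = inner ℂ v w := by
    intro w
    rw [← key a w]
    have h1 : (inner ℂ a (Θ w) : ℂ) = g (Θ w) := InnerProductSpace.toDual_symm_apply
    rw [h1]
    have h2 : g (Θ w) = fc ⟨Θ w, ⟨w, rfl⟩⟩ := hg ⟨Θ w, ⟨w, rfl⟩⟩
    rw [h2]
    have h3 : fc ⟨Θ w, ⟨w, rfl⟩⟩ = f₀ ⟨Θ w, ⟨w, rfl⟩⟩ := rfl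
    rw [h3, hf₀ w ⟨w, rfl⟩]
  have heqv : ((WithLp.equiv 2 (H₁ × H₂)).symm (T₁ a, T₂ a) : WithLp 2 (H₁ × H₂)) = v :=
    ext_inner_right ℂ hkey2
  have hv2 : v = (WithLp.equiv 2 (H₁ × H₂)).symm
      (K ((WithLp.equiv 2 (H₁ × H₂)) m).1, L ((WithLp.equiv 2 (H₁ × H₂)) m).2) := rfl
  rw [hv2] at heqv
  have := (WithLp.equiv 2 (H₁ × H₂)).symm.injective heqv
  exact ⟨congrArg Prod.fst this, congrArg Prod.snd this⟩

/-- if `{xₙ}` is a `K`-frame for `H₁`, `{yₙ}` is an `L`-frame for `H₂` (with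
synthesis operators `T₁, T₂`), and `{xₙ ⊕ yₙ}` is a `K ⊕ L`-frame for `H₁ ⊕ H₂`, then
`R(K) ⊆ T₁(N(T₂))` and `R(L) ⊆ T₂(N(T₁))`. -/
theorem range_subset_of_pair_kframe (K : H₁ →L[ℂ] H₁) (L : H₂ →L[ℂ] H₂)
    (x : ℕ → H₁) (y : ℕ → H₂)
    (hx : IsKFrame K x) (hy : IsKFrame L y)
    (T₁ : lp (fun _ : ℕ => ℂ) 2 →L[ℂ] H₁)
    (hT₁ : ∀ a : lp (fun _ : ℕ => ℂ) 2, HasSum (fun n => a n • x n) (T₁ a))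
    (T₂ : lp (fun _ : ℕ => ℂ) 2 →L[ℂ] H₂)
    (hT₂ : ∀ a : lp (fun _ : ℕ => ℂ) 2, HasSum (fun n => a n • y n) (T₂ a))
    (h : IsKFrame (dsum K L) (pairSeq x y)) :
    Set.range K ⊆ T₁ '' (LinearMap.ker (T₂ : lp (fun _ : ℕ => ℂ) 2 →ₗ[ℂ] H₂) : Set (lp (fun _ : ℕ => ℂ) 2)) ∧
    Set.range L ⊆ T₂ '' (LinearMap.ker (T₁ : lp (fun _ : ℕ => ℂ) 2 →ₗ[ℂ] H₁) : Set (lp (fun _ : ℕ => ℂ) 2)) := by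
  constructor
  · rintro _ ⟨u, rfl⟩
    obtain ⟨a, ha1, ha2⟩ := aux_key K L x y T₁ hT₁ T₂ hT₂ h
      ((WithLp.equiv 2 (H₁ × H₂)).symm (u, 0))
    refine ⟨a, ?_, ?_⟩
    · have : T₂ a = L 0 := ha2
      simpa [LinearMap.mem_ker] using this
    · exact ha1
  · rintro _ ⟨u, rfl⟩
    obtain ⟨a, ha1, ha2⟩ := aux_key K L x y T₁ hT₁ T₂ hT₂ h
      ((WithLp.equiv 2 (H₁ × H₂)).symm (0, u))
    refine ⟨a, ?_, ?_⟩
    · have : T₁ a = K 0 := ha1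
      simpa [LinearMap.mem_ker] using this
    · exact ha2
end
end

section
/- Let K be a bounded operator on H₁ and L a bounded operator on H₂, and let {xₙ ⊕ yₙ}ₙ≥1 be a K ⊕ L-frame for H₁ ⊕ H₂. If {aₙ ⊕ bₙ}ₙ≥1 is a K ⊕ L-dual frame to {xₙ ⊕ yₙ}ₙ≥1, then {aₙ}ₙ≥1 is a K-dual frame to {xₙ}ₙ≥1 and {bₙ}ₙ≥1 is an L-dual frame to {yₙ}ₙ≥1. -/
noncomputable section

open scoped ENNReal

variable {H₁ H₂ : Type*}
  [NormedAddCommGroup H₁] [InnerProductSpace ℂ H₁] [CompleteSpace H₁]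
  [TopologicalSpace.SeparableSpace H₁]
  [NormedAddCommGroup H₂] [InnerProductSpace ℂ H₂] [CompleteSpace H₂]
  [TopologicalSpace.SeparableSpace H₂]

/-- A Bessel sequence `{fₙ}` is a `K`-dual frame to `{xₙ}` if `Kv = ∑ₙ ⟨v, fₙ⟩ xₙ` for all `v`
(with the inner product linear in `v`). -/
def IsKDual {H : Type*} [NormedAddCommGroup H] [InnerProductSpace ℂ H] [CompleteSpace H]
    (K : H →L[ℂ] H) (f x : ℕ → H) : Prop :=
  IsBessel f ∧ ∀ v : H, HasSum (fun n => (inner ℂ (f n) v : ℂ) • x n) (K v)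

/-- if `{xₙ ⊕ yₙ}` is a `K ⊕ L`-frame for `H₁ ⊕ H₂` and `{aₙ ⊕ bₙ}` is a
`K ⊕ L`-dual frame to it, then `{aₙ}` is a `K`-dual frame to `{xₙ}` and `{bₙ}` is an
`L`-dual frame to `{yₙ}`. -/
theorem dual_of_pair_dual (K : H₁ →L[ℂ] H₁) (L : H₂ →L[ℂ] H₂)
    (x a : ℕ → H₁) (y b : ℕ → H₂)
    (h : IsKFrame (dsum K L) (pairSeq x y))
    (hdual : IsKDual (dsum K L) (pairSeq a b) (pairSeq x y)) :
    IsKDual K a x ∧ IsKDual L b y := by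
  obtain ⟨⟨B, hB, hBessel⟩, hsum⟩ := hdual
  have fst : WithLp 2 (H₁ × H₂) →L[ℂ] H₁ :=
    (ContinuousLinearMap.fst ℂ H₁ H₂) ∘L
      ((WithLp.prodContinuousLinearEquiv 2 ℂ H₁ H₂) : WithLp 2 (H₁ × H₂) →L[ℂ] (H₁ × H₂))
  constructor
  · refine ⟨⟨B, hB, fun v => ?_⟩, fun v => ?_⟩
    · have := hBessel ((WithLp.equiv 2 (H₁ × H₂)).symm (v, 0))
      have hinner : ∀ n, (inner ℂ ((WithLp.equiv 2 (H₁ × H₂)).symm (v, 0)) (pairSeq a b n) : ℂ)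
          = inner ℂ v (a n) := by
        intro n
        simp [pairSeq, WithLp.prod_inner_apply]
      have hnorm : ‖(WithLp.equiv 2 (H₁ × H₂)).symm (v, 0)‖ = ‖v‖ :=
        WithLp.norm_toLp_fst 2 H₁ H₂ v
      simpa only [hinner, hnorm] using this
    · have hs := hsum ((WithLp.equiv 2 (H₁ × H₂)).symm (v, 0))
      let P : WithLp 2 (H₁ × H₂) →L[ℂ] H₁ :=
        (ContinuousLinearMap.fst ℂ H₁ H₂) ∘L
          ((WithLp.prodContinuousLinearEquiv 2 ℂ H₁ H₂) : WithLp 2 (H₁ × H₂) →L[ℂ] (H₁ × H₂))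
      have := hs.mapL P
      have hinner : ∀ n, (inner ℂ (pairSeq a b n) ((WithLp.equiv 2 (H₁ × H₂)).symm (v, 0)) : ℂ)
          = inner ℂ (a n) v := by
        intro n
        simp [pairSeq, WithLp.prod_inner_apply]
      have hP : ∀ (c : ℂ) n, P (c • pairSeq x y n) = c • x n := by
        intro c n
        rfl
      have hPd : P ((dsum K L) ((WithLp.equiv 2 (H₁ × H₂)).symm (v, 0))) = K v := by
        rfl
      simpa only [hinner, hP, hPd] using this
  · refine ⟨⟨B, hB, fun v => ?_⟩, fun v => ?_⟩
    · have := hBessel ((WithLp.equiv 2 (H₁ × H₂)).symm (0, v))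
      have hinner : ∀ n, (inner ℂ ((WithLp.equiv 2 (H₁ × H₂)).symm (0, v)) (pairSeq a b n) : ℂ)
          = inner ℂ v (b n) := by
        intro n
        simp [pairSeq, WithLp.prod_inner_apply]
      have hnorm : ‖(WithLp.equiv 2 (H₁ × H₂)).symm (0, v)‖ = ‖v‖ :=
        WithLp.norm_toLp_snd 2 H₁ H₂ v
      simpa only [hinner, hnorm] using this
    · have hs := hsum ((WithLp.equiv 2 (H₁ × H₂)).symm (0, v))
      let P : WithLp 2 (H₁ × H₂) →L[ℂ] H₂ :=
        (ContinuousLinearMap.snd ℂ H₁ H₂) ∘L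
          ((WithLp.prodContinuousLinearEquiv 2 ℂ H₁ H₂) : WithLp 2 (H₁ × H₂) →L[ℂ] (H₁ × H₂))
      have := hs.mapL P
      have hinner : ∀ n, (inner ℂ (pairSeq a b n) ((WithLp.equiv 2 (H₁ × H₂)).symm (0, v)) : ℂ)
          = inner ℂ (b n) v := by
        intro n
        simp [pairSeq, WithLp.prod_inner_apply]
      have hP : ∀ (c : ℂ) n, P (c • pairSeq x y n) = c • y n := by
        intro c n
        rfl
      have hPd : P ((dsum K L) ((WithLp.equiv 2 (H₁ × H₂)).symm (0, v))) = L v := by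
        rfl
      simpa only [hinner, hP, hPd] using this
end
end
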